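/- Fix r > 0. For (ξ,η) ∈ ℂ², let G_{(ξ,η)} be the real symmetric bilinear form on ℂ² given by G_{(ξ,η)}((u,w),(u′,w′)) = (1+ξξ̄)⁻²·[Im(w̄u′ + w̄′u) + (2·Im(ξ̄η)/(1+ξξ̄))·(uū′ + u′ū)], and let F : ℂ² → ℝ be F(ξ,η) = 4ηη̄ − r²(1+ξξ̄)². Then for every (ξ,η) with F(ξ,η) = 0 and every v ∈ ℂ² such that G_{(ξ,η)}(v,w) = 0 for all w in the kernel of the Fréchet derivative of F at (ξ,η), one has G_{(ξ,η)}(v,v) = 0. That is, the level hypersurface {F = 0} is null with respect to G: its G-normal at each point is a null vector. -/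

import Mathlib

/-- The canonical neutral metric on L(ℝ³) ≅ Tℂ in local holomorphic coordinates (ξ,η),
as a real symmetric bilinear form on ℂ² at the point p = (ξ,η):
G((u,w),(u′,w′)) = (1+ξξ̄)⁻²·[Im(w̄u′ + w̄′u) + (2·Im(ξ̄η)/(1+ξξ̄))·(uū′ + u′ū)]. -/
noncomputable def Gneutral (p : ℂ × ℂ) (v w : ℂ × ℂ) : ℝ :=
  ((1 + Complex.normSq p.1) ^ 2)⁻¹ *
    ((((starRingEnd ℂ) v.2) * w.1 + ((starRingEnd ℂ) w.2) * v.1).im +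
      (2 * (((starRingEnd ℂ) p.1) * p.2).im / (1 + Complex.normSq p.1)) *
        (v.1 * ((starRingEnd ℂ) w.1) + w.1 * ((starRingEnd ℂ) v.1)).re)

/-- F(ξ,η) = 4ηη̄ − r²(1+ξξ̄)²; the hypersurface {F = 0} is the set of oriented lines
tangent to the round sphere of radius r centred at the origin. -/
noncomputable def Ftangent (r : ℝ) (p : ℂ × ℂ) : ℝ :=
  4 * Complex.normSq p.2 - r ^ 2 * (1 + Complex.normSq p.1) ^ 2

open Complex

lemma fderivF (r : ℝ) (p : ℂ × ℂ) (w : ℂ × ℂ) :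
    fderiv ℝ (Ftangent r) p w =
      8 * (((starRingEnd ℂ) p.2) * w.2).re
        - 4 * r ^ 2 * (1 + normSq p.1) * (((starRingEnd ℂ) p.1) * w.1).re := by
  have h2 : HasFDerivAt (fun q : ℂ × ℂ => ‖q.2‖ ^ 2)
      ((2:ℕ) • (innerSL ℝ p.2).comp (ContinuousLinearMap.snd ℝ ℂ ℂ)) p :=
    (hasFDerivAt_snd).norm_sq
  have h1 : HasFDerivAt (fun q : ℂ × ℂ => 1 + ‖q.1‖ ^ 2)
      ((2:ℕ) • (innerSL ℝ p.1).comp (ContinuousLinearMap.fst ℝ ℂ ℂ)) p :=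
    (hasFDerivAt_fst).norm_sq.const_add 1
  have hF := (h2.const_mul (4:ℝ)).sub ((h1.mul h1).const_mul (r ^ 2))
  have hfun : Ftangent r = fun q : ℂ × ℂ =>
      4 * ‖q.2‖ ^ 2 - r ^ 2 * ((1 + ‖q.1‖ ^ 2) * (1 + ‖q.1‖ ^ 2)) := by
    funext q
    simp only [Ftangent, Complex.normSq_eq_norm_sq]
    ring
  have hF' : HasFDerivAt (fun q : ℂ × ℂ =>
      4 * ‖q.2‖ ^ 2 - r ^ 2 * ((1 + ‖q.1‖ ^ 2) * (1 + ‖q.1‖ ^ 2))) _ p := hF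
  rw [hfun, hF'.fderiv]
  simp [Complex.inner, Complex.normSq_eq_norm_sq]
  ring


/-- The tangent hypersurface {F = 0} is null with respect to the neutral metric G: any
vector G-orthogonal to the kernel of dF (i.e. a G-normal of the hypersurface) is null. -/
theorem stmt5 (r : ℝ) (hr : 0 < r) (p : ℂ × ℂ) (hp : Ftangent r p = 0)
    (v : ℂ × ℂ) (hv : ∀ w : ℂ × ℂ, fderiv ℝ (Ftangent r) p w = 0 → Gneutral p v w = 0) :
    Gneutral p v v = 0 := by
  have hS : (0:ℝ) < 1 + normSq p.1 := by
    have := normSq_nonneg p.1; linarith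
  have hp' : 4 * normSq p.2 = r ^ 2 * (1 + normSq p.1) ^ 2 := by
    have := hp; unfold Ftangent at this; linarith
  -- first test vector
  have e1 := hv (0, Complex.I * p.2) (by
    rw [fderivF]
    simp [Complex.mul_re, Complex.mul_im, Complex.normSq_apply]
    ring)
  -- second test vector
  set c : ℝ := 2 * (((starRingEnd ℂ) p.1) * v.1).re / (1 + normSq p.1) with hc
  have hp2 : 4 * (p.2.re * p.2.re + p.2.im * p.2.im)
      = r ^ 2 * (1 + (p.1.re * p.1.re + p.1.im * p.1.im)) ^ 2 := by
    simpa [Complex.normSq_apply] using hp'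
  have hSne0 : (1 + (p.1.re * p.1.re + p.1.im * p.1.im)) ≠ 0 := by nlinarith [sq_nonneg p.1.re, sq_nonneg p.1.im, mul_self_nonneg p.1.re, mul_self_nonneg p.1.im]
  have e2 := hv (v.1, (c:ℂ) * p.2) (by
    rw [fderivF, hc]
    simp only [Complex.mul_re, Complex.mul_im, Complex.conj_re, Complex.conj_im,
      Complex.ofReal_re, Complex.ofReal_im, Complex.normSq_apply, zero_mul, mul_zero,
      sub_zero, zero_sub]
    field_simp
    linear_combination 4 * (p.1.re * v.1.re + p.1.im * v.1.im) * hp2)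
  -- clear the nonzero prefactor in e1
  have hA : ((1 + normSq p.1) ^ 2)⁻¹ ≠ 0 := by positivity
  unfold Gneutral at e1 e2 ⊢
  rw [mul_eq_zero] at e1 e2 ⊢
  rcases e1 with e1 | e1
  · exact absurd e1 hA
  rcases e2 with e2 | e2
  · exact absurd e2 hA
  right
  rw [hc] at e2
  -- coordinates
  simp only [Complex.add_im, Complex.add_re, Complex.mul_im, Complex.mul_re,
    Complex.conj_re, Complex.conj_im, Complex.I_re, Complex.I_im,
    Complex.ofReal_re, Complex.ofReal_im, Complex.zero_re, Complex.zero_im,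
    Complex.normSq_apply, mul_zero, zero_mul, add_zero, zero_add, sub_zero,
    zero_sub, neg_zero, neg_neg, mul_one, one_mul] at e1 e2 ⊢
  set a := p.1.re; set b := p.1.im
  set cc := p.2.re; set d := p.2.im
  set x := v.1.re; set y := v.1.im
  set e := v.2.re; set f := v.2.im
  have hSne : (1 + (a * a + b * b)) ≠ 0 := by positivity
  field_simp at e2 ⊢
  linear_combination 2 * e2 + 4 * (a * y - b * x) * e1
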